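/- Let 𝓗 be a finite-dimensional Hilbert space and let C₀, C₁ ∈ [𝓗] satisfy Im(C₁ C₀*) = 0 and 0 ∈ ρ(C₀ ± i C₁) (i.e. C₀ + iC₁ and C₀ − iC₁ are invertible). Then the linear relation θ = {(h₀,h₁) ∈ 𝓗 ⊕ 𝓗 : C₀ h₀ + C₁ h₁ = 0} is self-adjoint: θ = θ*. -/

import Mathlib

noncomputable section

/-- The adjoint relation `θ* = {(k,k') : ⟪k',h⟫ = ⟪k,h'⟫ for all (h,h') ∈ θ}`. -/
def relAdjSet {H : Type*} [NormedAddCommGroup H] [InnerProductSpace ℂ H]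
    (A : Set (H × H)) : Set (H × H) :=
  {p | ∀ q ∈ A, (@inner ℂ _ _ p.2 q.1) = @inner ℂ _ _ p.1 q.2}

/-- If `C₀, C₁ ∈ [𝓗]` satisfy `Im (C₁ C₀*) = 0` (i.e. `C₁C₀*` is self-adjoint) and
`C₀ ± i C₁` are invertible, then the linear relation
`θ = {(h₀,h₁) : C₀ h₀ + C₁ h₁ = 0}` is self-adjoint: `θ = θ*`. -/
theorem stmt7 {𝓗 : Type*} [NormedAddCommGroup 𝓗] [InnerProductSpace ℂ 𝓗]
    [FiniteDimensional ℂ 𝓗]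
    (C₀ C₁ : 𝓗 →L[ℂ] 𝓗)
    (hsa : IsSelfAdjoint (C₁ ∘L ContinuousLinearMap.adjoint C₀))
    (hplus : Function.Bijective ⇑(C₀ + Complex.I • C₁))
    (hminus : Function.Bijective ⇑(C₀ - Complex.I • C₁)) :
    let θ : Submodule ℂ (𝓗 × 𝓗) :=
      LinearMap.ker ((C₀ : 𝓗 →ₗ[ℂ] 𝓗).coprod (C₁ : 𝓗 →ₗ[ℂ] 𝓗))
    (θ : Set (𝓗 × 𝓗)) = relAdjSet (θ : Set (𝓗 × 𝓗)) := by
  intro θ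
  -- Notation for adjoints
  set A₀ := ContinuousLinearMap.adjoint C₀ with hA₀
  set A₁ := ContinuousLinearMap.adjoint C₁ with hA₁
  -- `C₁ C₀* = C₀ C₁*`
  have hsa' : ∀ g : 𝓗, C₀ (A₁ g) = C₁ (A₀ g) := by
    intro g
    have h1 : ContinuousLinearMap.adjoint (C₁ ∘L A₀) = C₀ ∘L A₁ := by
      rw [ContinuousLinearMap.adjoint_comp, hA₀, ContinuousLinearMap.adjoint_adjoint]
    have h2 := hsa.adjoint_eq
    rw [h1] at h2
    exact DFunLike.congr_fun h2 g
  have hmemθ : ∀ p : 𝓗 × 𝓗, p ∈ θ ↔ C₀ p.1 + C₁ p.2 = 0 := by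
    intro p
    simp [θ, LinearMap.mem_ker, LinearMap.coprod_apply]
  -- adjoint of `C₀ + I • C₁`
  have hadj_plus : ContinuousLinearMap.adjoint (C₀ + Complex.I • C₁)
      = A₀ - Complex.I • A₁ := by
    rw [map_add, map_smulₛₗ]
    simp [hA₀, hA₁, Complex.conj_I, sub_eq_add_neg, neg_smul]
  -- `(C₀ + I•C₁)*` is surjective
  have hsurj : Function.Surjective ⇑(ContinuousLinearMap.adjoint (C₀ + Complex.I • C₁)) := by
    set T := C₀ + Complex.I • C₁
    have hinj : Function.Injective ⇑(ContinuousLinearMap.adjoint T) := by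
      rw [injective_iff_map_eq_zero]
      intro g hg
      have : ∀ y : 𝓗, (inner ℂ y g : ℂ) = 0 := by
        intro y
        obtain ⟨x, hx⟩ := hplus.surjective y
        rw [← hx, ← ContinuousLinearMap.adjoint_inner_right, hg, inner_zero_right]
      have := this g
      rwa [inner_self_eq_zero] at this
    exact (LinearMap.injective_iff_surjective
      (f := (ContinuousLinearMap.adjoint T : 𝓗 →ₗ[ℂ] 𝓗))).mp hinj
  ext p
  obtain ⟨p₁, p₂⟩ := p
  constructor
  · -- θ ⊆ θ*
    intro hp
    rw [SetLike.mem_coe, hmemθ] at hp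
    -- find g with C₀* g = p₂ and C₁* g = -p₁
    obtain ⟨g, hg⟩ := hsurj (p₂ + Complex.I • p₁)
    rw [hadj_plus] at hg
    -- hg : A₀ g - I • A₁ g = p₂ + I • p₁
    have hg' : A₀ g - p₂ = Complex.I • (A₁ g + p₁) := by
      have := hg
      simp only [ContinuousLinearMap.sub_apply, ContinuousLinearMap.smul_apply] at this
      rw [smul_add]
      linear_combination (norm := module) this
    have hb : A₁ g + p₁ = 0 := by
      apply hminus.injective
      rw [map_zero]
      have h1 : C₀ (A₁ g + p₁) = C₁ (A₀ g - p₂) := by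
        rw [map_add, map_sub, hsa' g]
        rw [show C₁ (A₀ g) - C₁ p₂ = C₁ (A₀ g) + C₀ p₁ - (C₀ p₁ + C₁ p₂) by abel, hp]
        abel
      rw [hg', map_smul] at h1
      simp only [ContinuousLinearMap.sub_apply, ContinuousLinearMap.smul_apply]
      rw [h1]
      abel
    have hA₁g : A₁ g = -p₁ := by linear_combination (norm := module) hb
    have hA₀g : A₀ g = p₂ := by
      have := hg'
      rw [hb, smul_zero] at this
      linear_combination (norm := module) this
    -- now verify the adjoint-relation condition
    intro q hq
    rw [SetLike.mem_coe, hmemθ] at hq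
    have e1 : (inner ℂ p₂ q.1 : ℂ) = inner ℂ g (C₀ q.1) := by
      rw [← hA₀g, hA₀, ContinuousLinearMap.adjoint_inner_left]
    have e2 : (inner ℂ p₁ q.2 : ℂ) = - inner ℂ g (C₁ q.2) := by
      rw [show p₁ = -(A₁ g) by rw [hA₁g]; abel, inner_neg_left, hA₁,
        ContinuousLinearMap.adjoint_inner_left]
    rw [e1, e2]
    have : (inner ℂ g (C₀ q.1 + C₁ q.2) : ℂ) = 0 := by rw [hq, inner_zero_right]
    rw [inner_add_right] at this
    linear_combination this
  · -- θ* ⊆ θ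
    intro hp
    rw [SetLike.mem_coe, hmemθ]
    have key : ∀ g : 𝓗, (inner ℂ (C₀ p₁ + C₁ p₂) g : ℂ) = 0 := by
      intro g
      have hqmem : (-(A₁ g), A₀ g) ∈ (θ : Set (𝓗 × 𝓗)) := by
        rw [SetLike.mem_coe, hmemθ]
        simp only [map_neg]
        rw [hsa' g]
        abel
      have := hp _ hqmem
      simp only [inner_neg_right, hA₀, hA₁,
        ContinuousLinearMap.adjoint_inner_right] at this
      rw [inner_add_left]
      linear_combination -this
    have := key (C₀ p₁ + C₁ p₂)
    rwa [inner_self_eq_zero] at this
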